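/- arXiv:0909.3567 — 9 statements merged into one kernel-verified Lean document; each statement's English description precedes it below -/
import Mathlib

section
/- Let x, y be positive integers with x ≤ y and xy - x - y ≠ 0. Then (x+y)/(xy-x-y) is an integer if and only if (x,y) is one of: (1,λ) for some positive integer λ, (2,3), (2,4), (2,6), (3,3), (3,6), or (4,4). -/
theorem stmt_0 (x y : ℤ) (hx : 0 < x) (hy : 0 < y) (hxy : x ≤ y)
    (hne : x * y - x - y ≠ 0) :
    (x * y - x - y) ∣ (x + y) ↔
      x = 1 ∨ (x, y) = (2, 3) ∨ (x, y) = (2, 4) ∨ (x, y) = (2, 6) ∨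
      (x, y) = (3, 3) ∨ (x, y) = (3, 6) ∨ (x, y) = (4, 4) := by
  constructor
  · intro h
    by_cases hx1 : x = 1
    · exact Or.inl hx1
    · have hx2 : 2 ≤ x := by omega
      have hp : 0 < (x - 1) * (y - 1) := mul_pos (by omega) (by omega)
      have key : x * y - x - y = (x - 1) * (y - 1) - 1 := by ring
      have hd0 : 0 < x * y - x - y := by omega
      have hle : x * y - x - y ≤ x + y := Int.le_of_dvd (by omega) h
      have hx4 : x ≤ 4 := by nlinarith [key, hp]
      interval_cases x
      · -- x = 2
        have h4 : (y - 2) ∣ 4 := by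
          have h' : (y - 2) ∣ (2 + y) := by
            have e : 2 * y - 2 - y = y - 2 := by ring
            rwa [e] at h
          have h'' := dvd_sub h' (dvd_refl (y - 2))
          have e2 : 2 + y - (y - 2) = 4 := by ring
          rwa [e2] at h''
        have hy6 : y - 2 ≤ 4 := Int.le_of_dvd (by norm_num) (by simpa using h4)
        have hy6b : y ≤ 6 := by omega
        interval_cases y <;> simp_all <;> omega
      · -- x = 3
        have hy6 : y ≤ 6 := by omega
        interval_cases y <;> simp_all <;> omega
      · -- x = 4
        have hy4 : y ≤ 4 := by omega
        interval_cases y <;> simp_all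
  · rintro (h | h | h | h | h | h | h)
    · have : x * y - x - y = -1 := by subst h; ring
      rw [this]; exact ⟨-(x + y), by ring⟩
    all_goals (obtain ⟨h1, h2⟩ := Prod.mk.injEq .. ▸ h; subst h1; subst h2; decide)
end

section
/- Let x, y be positive integers with x ≤ y and xy - x - y ≠ 0. If (xy-x-y) divides (x+y), then x ≤ 4. -/
theorem stmt_1 (x y : ℤ) (hx : 0 < x) (hy : 0 < y) (hxy : x ≤ y)
    (hne : x * y - x - y ≠ 0) (hdvd : (x * y - x - y) ∣ (x + y)) :
    x ≤ 4 := by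
  by_contra h
  push_neg at h
  have h5 : 5 ≤ x := h
  have hpos : 0 < x * y - x - y := by nlinarith
  have hle : x * y - x - y ≤ x + y := Int.le_of_dvd (by linarith) hdvd
  nlinarith
end

section
/- Let x, y be positive integers with xy + y - x ≠ 0. Then (x-y)/(xy+y-x) is an integer if and only if y = 1 or y = x. -/
theorem stmt_2 (x y : ℤ) (hx : 0 < x) (hy : 0 < y)
    (hne : x * y + y - x ≠ 0) :
    (x * y + y - x) ∣ (x - y) ↔ y = 1 ∨ y = x := by
  constructor
  · intro h
    by_cases hy1 : y = 1
    · left; exact hy1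
    · right
      have hy2 : 2 ≤ y := by omega
      have habs : |x - y| < x * y + y - x := by
        rw [abs_lt]; constructor <;> nlinarith
      have := Int.eq_zero_of_abs_lt_dvd h habs
      omega
  · rintro (rfl | rfl)
    · have : x * 1 + 1 - x = 1 := by ring
      rw [this]; exact one_dvd _
    · simp
end

section
/- The periodic 3-dimensional Kac-van Moerbeke system admits a Lax pair: with L the 3×3 matrix with rows (0, x1, 1), (1, 0, x2), (x3, 1, 0) and B the matrix with rows (0, 0, x1·x2), (x2·x3, 0, 0), (0, x1·x3, 0), the equations x1' = x1(x3-x2), x2' = x2(x1-x3), x3' = x3(x2-x1) imply L' = L·B - B·L (entrywise). -/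
theorem stmt_9 (x1 x2 x3 : ℝ → ℝ)
    (h1 : ∀ t, HasDerivAt x1 (x1 t * (x3 t - x2 t)) t)
    (h2 : ∀ t, HasDerivAt x2 (x2 t * (x1 t - x3 t)) t)
    (h3 : ∀ t, HasDerivAt x3 (x3 t * (x2 t - x1 t)) t) :
    let L : ℝ → Matrix (Fin 3) (Fin 3) ℝ :=
      fun t => !![0, x1 t, 1; 1, 0, x2 t; x3 t, 1, 0]
    let B : ℝ → Matrix (Fin 3) (Fin 3) ℝ :=
      fun t => !![0, 0, x1 t * x2 t; x2 t * x3 t, 0, 0; 0, x1 t * x3 t, 0]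
    ∀ (i j : Fin 3) (t : ℝ),
      HasDerivAt (fun t => L t i j) ((L t * B t - B t * L t) i j) t := by
  intro L B i j t
  fin_cases i <;> fin_cases j <;>
    simp [L, B, Matrix.mul_apply, Fin.sum_univ_three] <;> ring_nf <;>
    first
      | exact hasDerivAt_const _ _
      | (exact (h1 t).congr_deriv (by ring))
      | (exact (h2 t).congr_deriv (by ring))
      | (exact (h3 t).congr_deriv (by ring))
end

section
/- Consider the 3×3 Lotka-Volterra system with parameters (a,b,c) and Kowalevski matrix K(m) = (∂f_i/∂x_j + δ_{ij}) evaluated at the indicial locus point m = (1/a, -1/a, 0) (assuming a ≠ 0). Then the eigenvalues of K(m) are -1, 1, and (a-b+c)/a. -/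
open Polynomial

theorem stmt_11 (a b c : ℝ) (ha : a ≠ 0) :
    let m1 : ℝ := 1 / a
    let m2 : ℝ := -1 / a
    let m3 : ℝ := 0
    let K : Matrix (Fin 3) (Fin 3) ℝ :=
      !![a * m2 + b * m3 + 1, a * m1, b * m1;
         -a * m2, -a * m1 + c * m3 + 1, c * m2;
         -b * m3, -c * m3, -b * m1 - c * m2 + 1]
    K.charpoly = (X - C (-1)) * (X - C 1) * (X - C ((a - b + c) / a)) := by
  intro m1 m2 m3 K
  have hK : K = !![(0:ℝ), 1, b/a; 1, 0, -(c/a); 0, 0, 1 - b/a + c/a] := by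
    simp only [K, m1, m2, m3]
    ext i j
    fin_cases i <;> fin_cases j <;>
      simp [Matrix.cons_val_zero, Matrix.cons_val_one, Matrix.vecHead, Matrix.vecTail] <;> field_simp <;> ring
  have hC : (a - b + c)/a = 1 - b/a + c/a := by field_simp
  rw [hK, hC, Matrix.charpoly, Matrix.det_fin_three]
  simp only [Matrix.charmatrix_apply, Matrix.cons_val', Matrix.cons_val_zero,
    Matrix.cons_val_one, Matrix.head_cons, Matrix.empty_val', Matrix.cons_val_fin_one,
    Matrix.cons_val_two, Matrix.tail_cons, Matrix.diagonal_apply, Matrix.map_apply,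
    Matrix.one_apply, Matrix.smul_apply, Matrix.vecHead, Matrix.vecTail]
  norm_num [Fin.ext_iff]
  push_cast [map_add, map_sub, map_mul, map_neg, map_one, map_zero, map_div₀]
  ring
end

section
/- The indicial locus of the 3×3 Lotka-Volterra system, i.e., the set of solutions (x,y,z) ∈ ℝ^3 of x + a·x·y + b·x·z = 0, y - a·x·y + c·y·z = 0, z - b·x·z - c·y·z = 0, with a, b, c all nonzero and a - b + c ≠ 0, consists exactly of the four points (0,0,0), (0, 1/c, -1/c), (1/b, 0, -1/b), and (1/a, -1/a, 0). -/
theorem stmt_13 (a b c : ℝ) (ha : a ≠ 0) (hb : b ≠ 0) (hc : c ≠ 0)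
    (habc : a - b + c ≠ 0) :
    {p : ℝ × ℝ × ℝ |
      p.1 + a * p.1 * p.2.1 + b * p.1 * p.2.2 = 0 ∧
      p.2.1 - a * p.1 * p.2.1 + c * p.2.1 * p.2.2 = 0 ∧
      p.2.2 - b * p.1 * p.2.2 - c * p.2.1 * p.2.2 = 0} =
    {(0, 0, 0), (0, 1 / c, -1 / c), (1 / b, 0, -1 / b), (1 / a, -1 / a, 0)} := by
  ext ⟨x, y, z⟩
  simp only [Set.mem_setOf_eq, Set.mem_insert_iff, Set.mem_singleton_iff, Prod.mk.injEq]
  constructor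
  · rintro ⟨h1, h2, h3⟩
    by_cases hx : x = 0
    · subst hx
      by_cases hy : y = 0
      · subst hy
        left
        constructor
        · rfl
        constructor
        · rfl
        · nlinarith [h3]
      · right; left
        have hz : 1 + c * z = 0 := by
          have : y * (1 + c * z) = 0 := by nlinarith [h2]
          rcases mul_eq_zero.1 this with h | h
          · exact absurd h hy
          · exact h
        have hz' : z = -1 / c := by field_simp; linarith
        subst hz'
        refine ⟨rfl, ?_, rfl⟩
        have hzne : (-1 / c : ℝ) ≠ 0 := by
          simp [hc]
        have : (-1 / c) * (1 - c * y) = 0 := by nlinarith [h3]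
        rcases mul_eq_zero.1 this with h | h
        · exact absurd h hzne
        · field_simp; linarith
    · have e1 : 1 + a * y + b * z = 0 := by
        have : x * (1 + a * y + b * z) = 0 := by nlinarith [h1]
        rcases mul_eq_zero.1 this with h | h
        · exact absurd h hx
        · exact h
      by_cases hy : y = 0
      · subst hy
        right; right; left
        have hz : z = -1 / b := by field_simp; nlinarith [e1]
        subst hz
        have hzne : (-1 / b : ℝ) ≠ 0 := by simp [hb]
        have : (-1 / b) * (1 - b * x) = 0 := by nlinarith [h3]
        rcases mul_eq_zero.1 this with h | h
        · exact absurd h hzne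
        · refine ⟨?_, rfl, rfl⟩
          field_simp; linarith
      · have e2 : 1 - a * x + c * z = 0 := by
          have : y * (1 - a * x + c * z) = 0 := by nlinarith [h2]
          rcases mul_eq_zero.1 this with h | h
          · exact absurd h hy
          · exact h
        by_cases hz : z = 0
        · subst hz
          right; right; right
          constructor
          · field_simp; nlinarith [e2]
          constructor
          · field_simp; nlinarith [e1]
          · rfl
        · exfalso
          have e3 : 1 - b * x - c * y = 0 := by
            have : z * (1 - b * x - c * y) = 0 := by nlinarith [h3]
            rcases mul_eq_zero.1 this with h | h
            · exact absurd h hz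
            · exact h
          have hsum : x + y + z = 0 := by nlinarith [h1, h2, h3]
          have : z * (b - c - a) = 0 := by linear_combination (e1 - e2) - a * hsum
          rcases mul_eq_zero.1 this with h | h
          · exact absurd h hz
          · apply habc; linarith
  · rintro (⟨hx, hy, hz⟩ | ⟨hx, hy, hz⟩ | ⟨hx, hy, hz⟩ | ⟨hx, hy, hz⟩) <;>
      subst hx <;> subst hy <;> subst hz <;>
      refine ⟨?_, ?_, ?_⟩ <;> field_simp <;> ring
end

section
/- If k1 and k2 are integers with 1 ≤ k1 ≤ k2 and k1·k2 - k1 - k2 ≠ 0, and (k1·k2)/(k1·k2 - k1 - k2) is an integer, then either k1 = 1, or (k1,k2) ∈ {(2,3),(2,4),(2,6),(3,3),(3,6),(4,4)}. -/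
theorem stmt_14 (k1 k2 : ℤ) (h1 : 1 ≤ k1) (h12 : k1 ≤ k2)
    (hne : k1 * k2 - k1 - k2 ≠ 0)
    (hdvd : (k1 * k2 - k1 - k2) ∣ (k1 * k2)) :
    k1 = 1 ∨ (k1, k2) = (2, 3) ∨ (k1, k2) = (2, 4) ∨ (k1, k2) = (2, 6) ∨
    (k1, k2) = (3, 3) ∨ (k1, k2) = (3, 6) ∨ (k1, k2) = (4, 4) := by
  rcases h1.eq_or_lt with h | h
  · left; omega
  right
  have h2 : 2 ≤ k1 := h
  have h0 : 0 ≤ k1 * k2 - k1 - k2 := by nlinarith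
  have hpos : 0 < k1 * k2 - k1 - k2 := lt_of_le_of_ne h0 (Ne.symm hne)
  have hsum : (k1 * k2 - k1 - k2) ∣ (k1 + k2) := by
    have hd := hdvd.sub (dvd_refl (k1 * k2 - k1 - k2))
    have e : k1 * k2 - (k1 * k2 - k1 - k2) = k1 + k2 := by ring
    rwa [e] at hd
  have hle := Int.le_of_dvd (by linarith) hsum
  have hk1 : k1 ≤ 4 := by nlinarith
  simp only [Prod.mk.injEq]
  clear hdvd hne
  interval_cases k1
  · -- k1 = 2
    have h4 : (k2 - 2) ∣ 4 := by
      have hd := hsum.sub (dvd_refl (2 * k2 - 2 - k2))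
      have e : 2 + k2 - (2 * k2 - 2 - k2) = 4 := by ring
      have e2 : k2 - 2 = 2 * k2 - 2 - k2 := by ring
      rw [e2]
      rwa [e] at hd
    have hb : k2 - 2 ≤ 4 := Int.le_of_dvd (by norm_num) h4
    have hb' : k2 ≤ 6 := by omega
    clear hsum hle hb
    interval_cases k2 <;> omega
  · have hb : k2 ≤ 6 := by linarith
    clear hpos h0
    interval_cases k2 <;> omega
  · have hb : k2 ≤ 4 := by linarith
    clear hpos h0
    interval_cases k2 <;> omega
end

section
/- If k1, k2 are nonzero integers with k1 > 0, k2 < 0, k1·k2 - k1 - k2 ≠ 0, and (k1·k2)/(k1·k2 - k1 - k2) is an integer, then k1 = 1 or k1 = -k2. -/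
theorem stmt_15 (k1 k2 : ℤ) (h1 : 0 < k1) (h2 : k2 < 0)
    (hne : k1 * k2 - k1 - k2 ≠ 0)
    (hdvd : (k1 * k2 - k1 - k2) ∣ (k1 * k2)) :
    k1 = 1 ∨ k1 = -k2 := by
  have hd : (k1 * k2 - k1 - k2) ∣ (k1 + k2) := by
    have := hdvd.sub (dvd_refl (k1 * k2 - k1 - k2))
    have heq : k1 * k2 - (k1 * k2 - k1 - k2) = k1 + k2 := by ring
    rwa [heq] at this
  rcases eq_or_lt_of_le (show (1:ℤ) ≤ k1 by omega) with h | h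
  · left; omega
  · right
    have h2' : k1 ≥ 2 := h
    have habs : |k1 + k2| < -(k1 * k2 - k1 - k2) := by
      rcases abs_cases (k1 + k2) with ⟨e1, _⟩ | ⟨e1, _⟩ <;>
      rw [e1] <;> nlinarith
    have hd' : -(k1 * k2 - k1 - k2) ∣ (k1 + k2) := (neg_dvd).mpr hd
    have := Int.eq_zero_of_abs_lt_dvd hd' habs
    omega
end

section
/- Let a, c, k be real constants with a ≠ 0, c ≠ 0, k ≠ 0, and let C1, C2 be real constants. Define D(t) = C1·exp(a·k·t) + a·exp(-c·k·t) - C2, and on any interval where D(t) ≠ 0, define x1(t) = k·C1·exp(a·k·t)/D(t), x3(t) = k·a·exp(-c·k·t)/D(t), x2(t) = -k·C2/D(t). Then (x1,x2,x3) solves the Lotka-Volterra system x1' = a·k·x1 - a·x1² + c·x1·x3, x3' = -c·k·x3 + c·x3² - a·x1·x3, x2 = k - x1 - x3. -/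
theorem stmt_17 (a c k C1 C2 : ℝ) (ha : a ≠ 0) (hc : c ≠ 0) (hk : k ≠ 0) :
    let D : ℝ → ℝ := fun t => C1 * Real.exp (a * k * t) + a * Real.exp (-c * k * t) - C2
    let x1 : ℝ → ℝ := fun t => k * C1 * Real.exp (a * k * t) / D t
    let x3 : ℝ → ℝ := fun t => k * a * Real.exp (-c * k * t) / D t
    let x2 : ℝ → ℝ := fun t => -k * C2 / D t
    ∀ t : ℝ, D t ≠ 0 →
      HasDerivAt x1 (a * k * x1 t - a * (x1 t) ^ 2 + c * x1 t * x3 t) t ∧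
      HasDerivAt x3 (-c * k * x3 t + c * (x3 t) ^ 2 - a * x1 t * x3 t) t ∧
      x2 t = k - x1 t - x3 t := by
  intro D x1 x3 x2 t hD
  have he1 : HasDerivAt (fun t => Real.exp (a * k * t)) (Real.exp (a * k * t) * (a * k)) t := by
    simpa [Function.comp_def] using (Real.hasDerivAt_exp (a * k * t)).comp t
      ((hasDerivAt_id t).const_mul (a * k))
  have he2 : HasDerivAt (fun t => Real.exp (-c * k * t)) (Real.exp (-c * k * t) * (-c * k)) t := by
    simpa [Function.comp_def] using (Real.hasDerivAt_exp (-c * k * t)).comp t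
      ((hasDerivAt_id t).const_mul (-c * k))
  have hDd : HasDerivAt D (C1 * (Real.exp (a * k * t) * (a * k)) +
      a * (Real.exp (-c * k * t) * (-c * k))) t := by
    exact ((he1.const_mul C1).add (he2.const_mul a)).sub_const C2
  have hx1 : HasDerivAt x1
      ((k * C1 * (Real.exp (a * k * t) * (a * k)) * D t -
        k * C1 * Real.exp (a * k * t) * (C1 * (Real.exp (a * k * t) * (a * k)) +
          a * (Real.exp (-c * k * t) * (-c * k)))) / D t ^ 2) t :=
    ((he1.const_mul (k * C1)).div hDd hD)
  have hx3 : HasDerivAt x3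
      ((k * a * (Real.exp (-c * k * t) * (-c * k)) * D t -
        k * a * Real.exp (-c * k * t) * (C1 * (Real.exp (a * k * t) * (a * k)) +
          a * (Real.exp (-c * k * t) * (-c * k)))) / D t ^ 2) t :=
    ((he2.const_mul (k * a)).div hDd hD)
  refine ⟨?_, ?_, ?_⟩
  · convert hx1 using 1
    show a * k * (k * C1 * Real.exp (a * k * t) / D t) -
        a * (k * C1 * Real.exp (a * k * t) / D t) ^ 2 +
        c * (k * C1 * Real.exp (a * k * t) / D t) * (k * a * Real.exp (-c * k * t) / D t) = _
    have hDt : D t = C1 * Real.exp (a * k * t) + a * Real.exp (-c * k * t) - C2 := rfl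
    field_simp
    rw [hDt]; ring
  · convert hx3 using 1
    show -c * k * (k * a * Real.exp (-c * k * t) / D t) +
        c * (k * a * Real.exp (-c * k * t) / D t) ^ 2 -
        a * (k * C1 * Real.exp (a * k * t) / D t) * (k * a * Real.exp (-c * k * t) / D t) = _
    have hDt : D t = C1 * Real.exp (a * k * t) + a * Real.exp (-c * k * t) - C2 := rfl
    field_simp
    rw [hDt]; ring
  · show -k * C2 / D t = k - k * C1 * Real.exp (a * k * t) / D t -
        k * a * Real.exp (-c * k * t) / D t
    have hDt : D t = C1 * Real.exp (a * k * t) + a * Real.exp (-c * k * t) - C2 := rfl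
    field_simp
    rw [hDt]; ring
end
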